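/- Under the un-normal Ricci flow of a C3-like metric, the variation of the fully I-contracted Cartan tensor satisfies C'_{ijk}I^iI^jI^k = (a_ih'_{jk} + a_jh'_{ki} + a_kh'_{ij})I^iI^jI^k + 3a'_iI^i‖I‖² − 6 b_i ρ_{,j} ‖I‖² I^iI^j, where I'_i = −ρ_{,i} is used and b'_i-terms are contracted via I_jI_k. -/
import Mathlib


open Finset

private lemma cyc3 {n : ℕ} (F : Fin n → Fin n → Fin n → ℝ) :
    (∑ i, ∑ j, ∑ k, F i j k) = ∑ j, ∑ k, ∑ i, F i j k := by
  rw [Finset.sum_comm]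
  exact Finset.sum_congr rfl fun _ _ => Finset.sum_comm

private lemma tf {n : ℕ} (f g p u : Fin n → ℝ) :
    (∑ i, ∑ j, ∑ k, f i * g j * p k * u i * u j * u k)
      = (∑ i, f i * u i) * (∑ j, g j * u j) * (∑ k, p k * u k) := by
  symm
  rw [Finset.sum_mul_sum, Finset.sum_mul]
  refine Finset.sum_congr rfl fun i _ => ?_
  rw [Finset.sum_mul]
  refine Finset.sum_congr rfl fun j _ => ?_
  rw [Finset.mul_sum]
  exact Finset.sum_congr rfl fun k _ => by ring

private lemma tf2 {n : ℕ} (f : Fin n → ℝ) (g : Fin n → Fin n → ℝ) (u : Fin n → ℝ) :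
    (∑ i, ∑ j, ∑ k, f i * g j k * u i * u j * u k)
      = (∑ i, f i * u i) * (∑ j, (∑ k, g j k * u k) * u j) := by
  symm
  rw [Finset.sum_mul_sum]
  refine Finset.sum_congr rfl fun i _ => Finset.sum_congr rfl fun j _ => ?_
  rw [Finset.sum_mul, Finset.mul_sum]
  exact Finset.sum_congr rfl fun k _ => by ring


open Finset in
/-- under the un-normal Ricci flow of a C3-like metric (with `I'_i = −ρ_{,i}`
and `b' = 0`), the variation of the fully `I`-contracted Cartan tensor satisfies
`C'_{ijk} I^i I^j I^k = Σ_cyc a_i h'_{jk} I^i I^j I^k + 3 a'_i I^i ‖I‖²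
  − 6 (b_i I^i)(ρ_{,j} I^j) ‖I‖²`. -/
theorem c3like_cartan_variation_contracted (n : ℕ)
    (a b I Iup rho' : ℝ → Fin n → ℝ)
    (h : ℝ → Fin n → Fin n → ℝ)
    (C : ℝ → Fin n → Fin n → Fin n → ℝ)
    (hC : ∀ t i j k, C t i j k = a t i * h t j k + a t j * h t k i + a t k * h t i j
      + b t i * I t j * I t k + b t j * I t i * I t k + b t k * I t i * I t j)
    (hhI : ∀ t i, ∑ j, h t i j * Iup t j = I t i)
    (hadiff : ∀ i, Differentiable ℝ (fun t => a t i))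
    (hbdiff : ∀ i, Differentiable ℝ (fun t => b t i))
    (hIdiff : ∀ i, Differentiable ℝ (fun t => I t i))
    (hhdiff : ∀ i j, Differentiable ℝ (fun t => h t i j))
    (hI' : ∀ t i, deriv (fun s => I s i) t = - rho' t i)
    (hb' : ∀ t i, deriv (fun s => b s i) t = 0) :
    ∀ t : ℝ,
      ∑ i, ∑ j, ∑ k, deriv (fun s => C s i j k) t * Iup t i * Iup t j * Iup t k =
        (∑ i, ∑ j, ∑ k,
          (a t i * deriv (fun s => h s j k) t + a t j * deriv (fun s => h s k i) t
            + a t k * deriv (fun s => h s i j) t) * Iup t i * Iup t j * Iup t k)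
        + 3 * (∑ i, deriv (fun s => a s i) t * Iup t i) * (∑ m, I t m * Iup t m)
        - 6 * (∑ i, b t i * Iup t i) * (∑ j, rho' t j * Iup t j)
            * (∑ m, I t m * Iup t m) := by
  intro t
  have Ha : ∀ m, HasDerivAt (fun s => a s m) (deriv (fun s => a s m) t) t :=
    fun m => ((hadiff m) t).hasDerivAt
  have Hb : ∀ m, HasDerivAt (fun s => b s m) (deriv (fun s => b s m) t) t :=
    fun m => ((hbdiff m) t).hasDerivAt
  have HI : ∀ m, HasDerivAt (fun s => I s m) (deriv (fun s => I s m) t) t :=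
    fun m => ((hIdiff m) t).hasDerivAt
  have Hh : ∀ p q, HasDerivAt (fun s => h s p q) (deriv (fun s => h s p q) t) t :=
    fun p q => ((hhdiff p q) t).hasDerivAt
  have hCd : ∀ i j k, deriv (fun s => C s i j k) t =
      deriv (fun s => a s i) t * h t j k + a t i * deriv (fun s => h s j k) t
      + deriv (fun s => a s j) t * h t k i + a t j * deriv (fun s => h s k i) t
      + deriv (fun s => a s k) t * h t i j + a t k * deriv (fun s => h s i j) t
      - b t i * rho' t j * I t k - b t i * I t j * rho' t k
      - b t j * rho' t i * I t k - b t j * I t i * rho' t k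
      - b t k * rho' t i * I t j - b t k * I t i * rho' t j := by
    intro i j k
    have hfe : (fun s => C s i j k) = fun s =>
        a s i * h s j k + a s j * h s k i + a s k * h s i j
          + b s i * I s j * I s k + b s j * I s i * I s k + b s k * I s i * I s j :=
      funext fun s => hC s i j k
    rw [hfe]
    have hd : deriv (fun s =>
        a s i * h s j k + a s j * h s k i + a s k * h s i j
          + b s i * I s j * I s k + b s j * I s i * I s k + b s k * I s i * I s j) t
      = (deriv (fun s => a s i) t * h t j k + a t i * deriv (fun s => h s j k) t)
        + (deriv (fun s => a s j) t * h t k i + a t j * deriv (fun s => h s k i) t)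
        + (deriv (fun s => a s k) t * h t i j + a t k * deriv (fun s => h s i j) t)
        + ((deriv (fun s => b s i) t * I t j + b t i * deriv (fun s => I s j) t) * I t k
            + b t i * I t j * deriv (fun s => I s k) t)
        + ((deriv (fun s => b s j) t * I t i + b t j * deriv (fun s => I s i) t) * I t k
            + b t j * I t i * deriv (fun s => I s k) t)
        + ((deriv (fun s => b s k) t * I t i + b t k * deriv (fun s => I s i) t) * I t j
            + b t k * I t i * deriv (fun s => I s j) t) :=
      (((((((Ha i).mul (Hh j k)).add ((Ha j).mul (Hh k i))).add ((Ha k).mul (Hh i j))).add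
          (((Hb i).mul (HI j)).mul (HI k))).add (((Hb j).mul (HI i)).mul (HI k))).add
          (((Hb k).mul (HI i)).mul (HI j))).deriv
    rw [hd]
    simp only [hI', hb']
    ring
  have hsplit : ∀ i j k, deriv (fun s => C s i j k) t * Iup t i * Iup t j * Iup t k =
      (a t i * deriv (fun s => h s j k) t + a t j * deriv (fun s => h s k i) t
          + a t k * deriv (fun s => h s i j) t) * Iup t i * Iup t j * Iup t k
      + deriv (fun s => a s i) t * h t j k * Iup t i * Iup t j * Iup t k
      + deriv (fun s => a s j) t * h t k i * Iup t i * Iup t j * Iup t k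
      + deriv (fun s => a s k) t * h t i j * Iup t i * Iup t j * Iup t k
      - b t i * rho' t j * I t k * Iup t i * Iup t j * Iup t k
      - b t i * I t j * rho' t k * Iup t i * Iup t j * Iup t k
      - rho' t i * b t j * I t k * Iup t i * Iup t j * Iup t k
      - I t i * b t j * rho' t k * Iup t i * Iup t j * Iup t k
      - rho' t i * I t j * b t k * Iup t i * Iup t j * Iup t k
      - I t i * rho' t j * b t k * Iup t i * Iup t j * Iup t k := by
    intro i j k
    rw [hCd i j k]; ring
  have hinner : (∑ j, (∑ k, h t j k * Iup t k) * Iup t j) = ∑ m, I t m * Iup t m :=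
    Finset.sum_congr rfl fun j _ => by rw [hhI t j]
  have hA1 : (∑ i, ∑ j, ∑ k,
        deriv (fun s => a s i) t * h t j k * Iup t i * Iup t j * Iup t k)
      = (∑ i, deriv (fun s => a s i) t * Iup t i) * (∑ m, I t m * Iup t m) := by
    rw [← hinner]
    exact tf2 (fun m => deriv (fun s => a s m) t) (h t) (Iup t)
  have hA2 : (∑ i, ∑ j, ∑ k,
        deriv (fun s => a s j) t * h t k i * Iup t i * Iup t j * Iup t k)
      = (∑ i, deriv (fun s => a s i) t * Iup t i) * (∑ m, I t m * Iup t m) := by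
    rw [← hinner,
      cyc3 (fun i j k => deriv (fun s => a s j) t * h t k i * Iup t i * Iup t j * Iup t k)]
    refine Eq.trans ?_ (tf2 (fun m => deriv (fun s => a s m) t) (h t) (Iup t))
    exact Finset.sum_congr rfl fun _ _ => Finset.sum_congr rfl fun _ _ =>
      Finset.sum_congr rfl fun _ _ => by ring
  have hA3 : (∑ i, ∑ j, ∑ k,
        deriv (fun s => a s k) t * h t i j * Iup t i * Iup t j * Iup t k)
      = (∑ i, deriv (fun s => a s i) t * Iup t i) * (∑ m, I t m * Iup t m) := by
    rw [← hinner,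
      cyc3 (fun i j k => deriv (fun s => a s k) t * h t i j * Iup t i * Iup t j * Iup t k),
      cyc3 (fun x y z => deriv (fun s => a s y) t * h t z x * Iup t z * Iup t x * Iup t y)]
    refine Eq.trans ?_ (tf2 (fun m => deriv (fun s => a s m) t) (h t) (Iup t))
    exact Finset.sum_congr rfl fun _ _ => Finset.sum_congr rfl fun _ _ =>
      Finset.sum_congr rfl fun _ _ => by ring
  simp only [hsplit, Finset.sum_add_distrib, Finset.sum_sub_distrib]
  rw [hA1, hA2, hA3, tf (b t) (rho' t) (I t) (Iup t), tf (b t) (I t) (rho' t) (Iup t),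
    tf (rho' t) (b t) (I t) (Iup t), tf (I t) (b t) (rho' t) (Iup t),
    tf (rho' t) (I t) (b t) (Iup t), tf (I t) (rho' t) (b t) (Iup t)]
  ring
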